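/- There is no family (μ_X), indexed by compact Hausdorff spaces X, of continuous maps μ_X : H(H(X)) → H(X) such that: (naturality) for every continuous map f : X → Y between compact Hausdorff spaces, μ_Y ∘ H(H(f)) = H(f) ∘ μ_X; and (unit laws) for every compact Hausdorff space X, μ_X ∘ H(η_X) = id_{H(X)} and μ_X ∘ η_{H(X)} = id_{H(X)}. -/

import Mathlib

open scoped Topology

/-- The index set `S(X)`: triples `(φ, a, b)` with `φ : X → ℝ` continuous and
`0 ≤ a < b ≤ 1`. -/
structure SIdx (X : Type u) [TopologicalSpace X] : Type u where
  φ : C(X, ℝ)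
  a : ℝ
  b : ℝ
  ha : 0 ≤ a
  hab : a < b
  hb : b ≤ 1

/-- `α : ℝ → X` is a step function on `[0,1)`: there is a partition
`0 = t 0 < t 1 < ⋯ < t k = 1` with `α` constant on each `[t j, t (j+1))`. -/
def IsStep {X : Type u} (α : ℝ → X) : Prop :=
  ∃ (k : ℕ) (t : ℕ → ℝ), 1 ≤ k ∧ t 0 = 0 ∧ t k = 1 ∧ (∀ j < k, t j < t (j + 1)) ∧
    ∀ j < k, ∀ s ∈ Set.Ico (t j) (t (j + 1)), α s = α (t j)

/-- The embedding `e_X`, sending `α` to the point of `∏_{S(X)} ℝ` whose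
`(φ, a, b)`-coordinate is `(1/(b-a)) ∫_a^b φ(α t) dt`. -/
noncomputable def eHM {X : Type u} [TopologicalSpace X] (α : ℝ → X) : SIdx X → ℝ :=
  fun s => (1 / (s.b - s.a)) * ∫ t in s.a..s.b, s.φ (α t)

/-- `H(X)` as a subset of `∏_{S(X)} ℝ`: the closure of the image under `e_X`
of the set of step functions. -/
def HSet (X : Type u) [TopologicalSpace X] : Set (SIdx X → ℝ) :=
  closure (eHM '' {α : ℝ → X | IsStep α})

/-- `H(X)` as a topological space (subspace of the product `∏_{S(X)} ℝ`). -/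
abbrev HSp (X : Type u) [TopologicalSpace X] : Type u := ↥(HSet X)

/-- `H_X(A)`: the closure of the image under `e_X` of the step functions taking
values in `A` on `[0,1)`. -/
def HSetOn (X : Type u) [TopologicalSpace X] (A : Set X) : Set (SIdx X → ℝ) :=
  closure (eHM '' {α : ℝ → X | IsStep α ∧ ∀ t ∈ Set.Ico (0:ℝ) 1, α t ∈ A})

/-- The support of `ν`: the intersection of all closed `A ⊆ X` with `ν ∈ H_X(A)`. -/
def suppH {X : Type u} [TopologicalSpace X] (ν : SIdx X → ℝ) : Set X :=
  ⋂₀ {A : Set X | IsClosed A ∧ ν ∈ HSetOn X A}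

/-- The reindexing map `R_f : ∏_{S(X)} ℝ → ∏_{S(Y)} ℝ`, `R_f x (ψ,a,b) = x (ψ∘f,a,b)`. -/
def reindex {X : Type u} {Y : Type v} [TopologicalSpace X] [TopologicalSpace Y]
    (f : C(X, Y)) : (SIdx X → ℝ) → (SIdx Y → ℝ) :=
  fun x s => x ⟨s.φ.comp f, s.a, s.b, s.ha, s.hab, s.hb⟩

lemma isStep_comp {X : Type u} {Y : Type v} (f : X → Y) {α : ℝ → X} (h : IsStep α) :
    IsStep (f ∘ α) := by
  obtain ⟨k, t, hk, h0, h1, hm, hc⟩ := h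
  exact ⟨k, t, hk, h0, h1, hm, fun j hj s hs => congrArg f (hc j hj s hs)⟩

lemma isStep_const {X : Type u} (x : X) : IsStep (fun _ : ℝ => x) :=
  ⟨1, fun j => (j : ℝ), le_refl 1, by simp, by simp,
    fun j _ => by simp, fun _ _ _ _ => rfl⟩

/-- The point `e_X(α)` of `H(X)`, for a step function `α`. -/
noncomputable def toH {X : Type u} [TopologicalSpace X] (α : ℝ → X) (h : IsStep α) : HSp X :=
  ⟨eHM α, subset_closure ⟨α, h, rfl⟩⟩

lemma continuous_reindex {X : Type u} {Y : Type v} [TopologicalSpace X] [TopologicalSpace Y]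
    (f : C(X, Y)) : Continuous (reindex f) :=
  continuous_pi fun _ => continuous_apply _

lemma reindex_mapsTo {X : Type u} {Y : Type v} [TopologicalSpace X] [TopologicalSpace Y]
    (f : C(X, Y)) : Set.MapsTo (reindex f) (HSet X) (HSet Y) := by
  intro x hx
  have h2 := image_closure_subset_closure_image (s := eHM '' {α : ℝ → X | IsStep α})
    (continuous_reindex f)
  have h3 : reindex f '' (eHM '' {α : ℝ → X | IsStep α}) ⊆ eHM '' {α : ℝ → Y | IsStep α} := by
    rintro _ ⟨_, ⟨α, hα, rfl⟩, rfl⟩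
    exact ⟨f ∘ α, isStep_comp f hα, rfl⟩
  exact closure_mono h3 (h2 ⟨x, hx, rfl⟩)

/-- The map `H(f) : H(X) → H(Y)` induced by a continuous `f : X → Y`, i.e. the
restriction of the reindexing map `R_f`. -/
noncomputable def Hmap {X : Type u} {Y : Type v} [TopologicalSpace X] [TopologicalSpace Y]
    (f : C(X, Y)) : C(HSp X, HSp Y) where
  toFun x := ⟨reindex f x.1, reindex_mapsTo f x.2⟩
  continuous_toFun :=
    Continuous.subtype_mk ((continuous_reindex f).comp continuous_subtype_val) _

/-- The unit `η_X : X → H(X)`, `x ↦ e_X(const x)`. -/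
noncomputable def etaMap (X : Type u) [TopologicalSpace X] : C(X, HSp X) where
  toFun x := toH (fun _ : ℝ => x) (isStep_const x)
  continuous_toFun := by
    refine Continuous.subtype_mk (continuous_pi fun s => ?_) _
    simp only [eHM, intervalIntegral.integral_const]
    exact continuous_const.mul ((s.φ.continuous).const_smul (s.b - s.a))
/-- The index (0-based) of the subinterval `[i/n, (i+1)/n)` of `[0,1)` containing `s`
(as a natural number, clipped to `n - 1`). -/
noncomputable def stepIdxNat (n : ℕ) (s : ℝ) : ℕ := min ⌊s * n⌋₊ (n - 1)

lemma stepIdxNat_eq {n j : ℕ} (hj : j < n) {s : ℝ}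
    (h1 : (j : ℝ) / n ≤ s) (h2 : s < ((j : ℝ) + 1) / n) : stepIdxNat n s = j := by
  have hn : (0:ℝ) < n := by
    have : 0 < n := by omega
    exact_mod_cast this
  have h1' : (j : ℝ) ≤ s * n := by rw [div_le_iff₀ hn] at h1; exact h1
  have h2' : s * n < (j : ℝ) + 1 := by rw [lt_div_iff₀ hn] at h2; exact h2
  have hfl : ⌊s * n⌋₊ = j := by
    rw [Nat.floor_eq_iff (le_trans (Nat.cast_nonneg j) h1')]
    exact ⟨h1', h2'⟩
  unfold stepIdxNat
  omega

lemma isStep_stepIdxNat (n : ℕ) : IsStep (stepIdxNat n) := by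
  rcases Nat.eq_zero_or_pos n with rfl | hn
  · exact ⟨1, fun j => (j : ℝ), le_refl 1, by simp, by simp, fun j _ => by simp,
      fun j hj s hs => by simp [stepIdxNat]⟩
  · have hnR : (0:ℝ) < n := by exact_mod_cast hn
    refine ⟨n, fun j => (j : ℝ) / n, hn, by simp, by field_simp,
      fun j hj => ?_, fun j hj s hs => ?_⟩
    · exact (div_lt_div_iff_of_pos_right hnR).mpr (by push_cast; linarith)
    · obtain ⟨hs1, hs2⟩ := hs
      have hs2' : s < ((j : ℝ) + 1) / n := by
        convert hs2 using 2
        all_goals first | rfl | (push_cast; ring)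
      rw [stepIdxNat_eq hj hs1 hs2',
        stepIdxNat_eq hj (le_refl _) ((div_lt_div_iff_of_pos_right hnR).mpr (by linarith))]
/-- The step function `β : [0,1) → K_n`, `β(s) = i` for `s ∈ [i/n, (i+1)/n)`,
with `K_n` realized as `Fin n` (0-based indexing). -/
noncomputable def stepIdx (n : ℕ) [NeZero n] (s : ℝ) : Fin n :=
  ⟨stepIdxNat n s, by
    have := NeZero.ne n
    unfold stepIdxNat
    omega⟩

lemma isStep_stepIdx (n : ℕ) [NeZero n] : IsStep (stepIdx n) := by
  have hn := NeZero.ne n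
  have h : stepIdx n =
      (fun m : ℕ => (⟨min m (n - 1), by omega⟩ : Fin n)) ∘ stepIdxNat n := by
    funext s
    apply Fin.ext
    simp [stepIdx, stepIdxNat, min_assoc]
  rw [h]
  exact isStep_comp _ (isStep_stepIdxNat n)

/-- The diagonal step function `α : [0,1) → K_n × K_n`, `α(s) = (i,i)` for
`s ∈ [i/n, (i+1)/n)`. -/
noncomputable def alphaDiag (n : ℕ) [NeZero n] : ℝ → Fin n × Fin n :=
  fun s => (stepIdx n s, stepIdx n s)

lemma isStep_alphaDiag (n : ℕ) [NeZero n] : IsStep (alphaDiag n) :=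
  isStep_comp (fun i : Fin n => (i, i)) (isStep_stepIdx n)

/-- The step function `α_i : [0,1) → K_n × K_n`, `α_i(s) = (i,j)` for
`s ∈ [j/n, (j+1)/n)`. -/
noncomputable def alphaRow (n : ℕ) [NeZero n] (i : Fin n) : ℝ → Fin n × Fin n :=
  fun s => (i, stepIdx n s)

lemma isStep_alphaRow (n : ℕ) [NeZero n] (i : Fin n) : IsStep (alphaRow n i) :=
  isStep_comp (fun j : Fin n => (i, j)) (isStep_stepIdx n)

/-- The step function `A_n : [0,1) → H(K_n × K_n)`, `A_n(s) = e(α_i)` for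
`s ∈ [i/n, (i+1)/n)`. -/
noncomputable def An (n : ℕ) [NeZero n] : ℝ → HSp (Fin n × Fin n) :=
  fun s => toH (alphaRow n (stepIdx n s)) (isStep_alphaRow n _)

lemma isStep_An (n : ℕ) [NeZero n] : IsStep (An n) :=
  isStep_comp (fun i : Fin n => toH (alphaRow n i) (isStep_alphaRow n i)) (isStep_stepIdx n)

/-- The step function `γ_i^{(n)} : [0,1) → D = {0,1}` which is `1` on
`[i/n, (i+1)/n)` and `0` elsewhere, with `D` realized as `Bool`. -/
noncomputable def gammaStep (n i : ℕ) : ℝ → Bool := fun s => decide (stepIdxNat n s = i)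

lemma isStep_gammaStep (n i : ℕ) : IsStep (gammaStep n i) :=
  isStep_comp (fun m : ℕ => decide (m = i)) (isStep_stepIdxNat n)

/-- The step function `B_n : [0,1) → H(D)`, `B_n(s) = e(γ_i^{(n)})` for
`s ∈ [i/n, (i+1)/n)`. -/
noncomputable def Bn (n : ℕ) : ℝ → HSp Bool :=
  fun s => toH (gammaStep n (stepIdxNat n s)) (isStep_gammaStep n _)

lemma isStep_Bn (n : ℕ) : IsStep (Bn n) :=
  isStep_comp (fun m : ℕ => toH (gammaStep n m) (isStep_gammaStep n m)) (isStep_stepIdxNat n)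

open MeasureTheory in
lemma isStep_intervalIntegrable {X : Type u} {α : ℝ → X} (h : IsStep α) (f : X → ℝ)
    {a b : ℝ} (ha : 0 ≤ a) (hab : a ≤ b) (hb : b ≤ 1) :
    IntervalIntegrable (fun s => f (α s)) volume a b := by
  obtain ⟨k, t, hk, h0, h1, hm, hc⟩ := h
  have tmono : ∀ i j : ℕ, i ≤ j → j ≤ k → t i ≤ t j := by
    intro i j hij hjk
    induction j with
    | zero => simp_all
    | succ m ih =>
      rcases Nat.eq_or_lt_of_le hij with rfl | hlt
      · exact le_refl _
      · exact le_trans (ih (Nat.lt_succ_iff.mp hlt) (by omega)) (le_of_lt (hm m (by omega)))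
  set g : ℝ → ℝ := fun s =>
    ∑ j ∈ Finset.range k, Set.indicator (Set.Ioo (t j) (t (j+1))) (fun _ => f (α (t j))) s with hg
  have hgint : Integrable g volume := by
    apply integrable_finset_sum
    intro j _
    exact (integrable_indicator_iff measurableSet_Ioo).2
      (integrableOn_const measure_Ioo_lt_top.ne)
  have hfin : (t '' Set.Iic k).Finite := (Set.finite_Iic k).image t
  have hae : ∀ᵐ s : ℝ, s ∉ t '' Set.Iic k :=
    measure_eq_zero_iff_ae_notMem.mp (hfin.measure_zero volume)
  have key : ∀ s ∈ Set.Ioc a b, s ∉ t '' Set.Iic k → f (α s) = g s := by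
    intro s hs hns
    have hs0 : 0 < s := lt_of_le_of_lt ha hs.1
    have hs1 : s < 1 := by
      have : s ≠ 1 := fun h => hns ⟨k, Set.mem_Iic.2 le_rfl, by rw [h1, h]⟩
      exact lt_of_le_of_ne (le_trans hs.2 hb) this
    have hex : ∃ m, s < t m := ⟨k, by rw [h1]; exact hs1⟩
    set m := Nat.find hex with hmdef
    have hmlt : s < t m := Nat.find_spec hex
    have hmk : m ≤ k := Nat.find_min' hex (by rw [h1]; exact hs1)
    have hm0 : m ≠ 0 := by
      intro h
      rw [h, h0] at hmlt; exact absurd hmlt (not_lt.2 hs0.le)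
    obtain ⟨j, hj⟩ : ∃ j, m = j + 1 := ⟨m - 1, by omega⟩
    rw [hj] at hmlt
    have hjk : j < k := by omega
    have hjm : j < Nat.find hex := by rw [← hmdef]; omega
    have hjle : t j ≤ s := not_lt.1 (Nat.find_min hex hjm)
    have hjne : s ≠ t j := fun h => hns ⟨j, Set.mem_Iic.2 (by omega), h.symm⟩
    have hsIoo : s ∈ Set.Ioo (t j) (t (j+1)) := ⟨lt_of_le_of_ne hjle (Ne.symm hjne), hmlt⟩
    have hgs : g s = f (α (t j)) := by
      simp only [hg]
      rw [Finset.sum_eq_single_of_mem j (Finset.mem_range.2 hjk)]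
      · rw [Set.indicator_of_mem hsIoo]
      · intro i hi hij
        apply Set.indicator_of_notMem
        intro hsi
        rcases lt_or_gt_of_ne hij with hlt | hgt
        · exact absurd hsi.2 (not_lt.2 (le_trans (tmono (i+1) j hlt hjk.le) hjle))
        · exact absurd hsi.1 (not_lt.2 (le_trans hmlt.le
            (tmono (j+1) i hgt (le_of_lt (Finset.mem_range.1 hi)))))
    rw [hgs]
    exact congrArg f (hc j hjk s ⟨hjle, hmlt⟩)
  rw [intervalIntegrable_iff_integrableOn_Ioc_of_le hab]
  apply hgint.integrableOn.congr
  filter_upwards [ae_restrict_mem measurableSet_Ioc, ae_restrict_of_ae hae] with s hs hns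
  exact (key s hs hns).symm
open MeasureTheory

lemma HSet_closed_prop {X : Type u} [TopologicalSpace X] {P : (SIdx X → ℝ) → Prop}
    (hP : IsClosed {x | P x}) (h : ∀ α : ℝ → X, IsStep α → P (eHM α))
    {ν : SIdx X → ℝ} (hν : ν ∈ HSet X) : P ν :=
  closure_minimal (by rintro x ⟨α, hα, rfl⟩; exact h α hα) hP hν

lemma HSet_add {X : Type u} [TopologicalSpace X] {ν : SIdx X → ℝ} (hν : ν ∈ HSet X)
    (φ ψ : C(X, ℝ)) {a b : ℝ} (pa : 0 ≤ a) (pab : a < b) (pb : b ≤ 1) :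
    ν ⟨φ + ψ, a, b, pa, pab, pb⟩ = ν ⟨φ, a, b, pa, pab, pb⟩ + ν ⟨ψ, a, b, pa, pab, pb⟩ := by
  refine HSet_closed_prop (P := fun x =>
    x ⟨φ + ψ, a, b, pa, pab, pb⟩ = x ⟨φ, a, b, pa, pab, pb⟩ + x ⟨ψ, a, b, pa, pab, pb⟩)
    (isClosed_eq (continuous_apply _)
      (by apply Continuous.add <;> exact continuous_apply _))
    (fun α hα => ?_) hν
  simp only [eHM, ContinuousMap.add_apply]
  rw [intervalIntegral.integral_add (isStep_intervalIntegrable hα φ pa pab.le pb)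
    (isStep_intervalIntegrable hα ψ pa pab.le pb)]
  ring

lemma HSet_const {X : Type u} [TopologicalSpace X] {ν : SIdx X → ℝ} (hν : ν ∈ HSet X)
    (c : ℝ) {a b : ℝ} (pa : 0 ≤ a) (pab : a < b) (pb : b ≤ 1) :
    ν ⟨ContinuousMap.const X c, a, b, pa, pab, pb⟩ = c := by
  refine HSet_closed_prop (P := fun x => x ⟨ContinuousMap.const X c, a, b, pa, pab, pb⟩ = c)
    (isClosed_eq (continuous_apply _) continuous_const) (fun α hα => ?_) hν
  simp only [eHM, ContinuousMap.const_apply]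
  rw [intervalIntegral.integral_const, smul_eq_mul, one_div,
    inv_mul_cancel_left₀ (sub_ne_zero.2 pab.ne')]

lemma HSet_smul {X : Type u} [TopologicalSpace X] {ν : SIdx X → ℝ} (hν : ν ∈ HSet X)
    (c : ℝ) (φ : C(X, ℝ)) {a b : ℝ} (pa : 0 ≤ a) (pab : a < b) (pb : b ≤ 1) :
    ν ⟨c • φ, a, b, pa, pab, pb⟩ = c * ν ⟨φ, a, b, pa, pab, pb⟩ := by
  refine HSet_closed_prop (P := fun x =>
    x ⟨c • φ, a, b, pa, pab, pb⟩ = c * x ⟨φ, a, b, pa, pab, pb⟩)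
    (isClosed_eq (continuous_apply _)
      (by apply Continuous.mul continuous_const; exact continuous_apply _))
    (fun α hα => ?_) hν
  simp only [eHM, ContinuousMap.smul_apply, smul_eq_mul]
  rw [intervalIntegral.integral_const_mul]
  ring

lemma HSet_mono {X : Type u} [TopologicalSpace X] {ν : SIdx X → ℝ} (hν : ν ∈ HSet X)
    {φ ψ : C(X, ℝ)} (hφψ : ∀ x, φ x ≤ ψ x) {a b : ℝ} (pa : 0 ≤ a) (pab : a < b) (pb : b ≤ 1) :
    ν ⟨φ, a, b, pa, pab, pb⟩ ≤ ν ⟨ψ, a, b, pa, pab, pb⟩ := by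
  refine HSet_closed_prop (P := fun x => x ⟨φ, a, b, pa, pab, pb⟩ ≤ x ⟨ψ, a, b, pa, pab, pb⟩)
    (isClosed_le (continuous_apply _) (continuous_apply _)) (fun α hα => ?_) hν
  simp only [eHM]
  apply mul_le_mul_of_nonneg_left _ (one_div_nonneg.2 (sub_nonneg.2 pab.le))
  exact intervalIntegral.integral_mono_on pab.le (isStep_intervalIntegrable hα φ pa pab.le pb)
    (isStep_intervalIntegrable hα ψ pa pab.le pb) (fun x _ => hφψ (α x))

lemma HSet_chasles {X : Type u} [TopologicalSpace X] {ν : SIdx X → ℝ} (hν : ν ∈ HSet X)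
    (φ : C(X, ℝ)) {a c b : ℝ} (pa : 0 ≤ a) (pac : a < c) (pcb : c < b) (pb : b ≤ 1)
    (p1 p2 p3 p4 p5 p6 p7 p8 p9 : _) :
    (b - a) * ν ⟨φ, a, b, p1, p2, p3⟩ =
      (c - a) * ν ⟨φ, a, c, p4, p5, p6⟩ + (b - c) * ν ⟨φ, c, b, p7, p8, p9⟩ := by
  refine HSet_closed_prop (P := fun x => (b - a) * x ⟨φ, a, b, p1, p2, p3⟩ =
      (c - a) * x ⟨φ, a, c, p4, p5, p6⟩ + (b - c) * x ⟨φ, c, b, p7, p8, p9⟩)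
    (isClosed_eq (by apply Continuous.mul continuous_const; exact continuous_apply _)
      (by apply Continuous.add <;> (apply Continuous.mul continuous_const; exact continuous_apply _)))
    (fun α hα => ?_) hν
  simp only [eHM]
  have hac := isStep_intervalIntegrable hα φ pa pac.le (le_trans pcb.le pb)
  have hcb := isStep_intervalIntegrable hα φ (le_trans pa pac.le) pcb.le pb
  have h3 : (a:ℝ) < b := lt_trans pac pcb
  rw [← intervalIntegral.integral_add_adjacent_intervals hac hcb]
  have e1 : b - a ≠ 0 := sub_ne_zero.2 h3.ne'
  have e2 : c - a ≠ 0 := sub_ne_zero.2 pac.ne'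
  have e3 : b - c ≠ 0 := sub_ne_zero.2 pcb.ne'
  field_simp

lemma toH_congr {X : Type u} [TopologicalSpace X] {α β : ℝ → X} (h : α = β)
    (hα : IsStep α) (hβ : IsStep β) : toH α hα = toH β hβ := by subst h; rfl

lemma Hmap_toH {X : Type u} {Y : Type v} [TopologicalSpace X] [TopologicalSpace Y]
    (f : C(X, Y)) (α : ℝ → X) (h : IsStep α) :
    Hmap f (toH α h) = toH (⇑f ∘ α) (isStep_comp ⇑f h) :=
  Subtype.ext rfl

lemma etaMap_coord {X : Type u} [TopologicalSpace X] (x : X) (s : SIdx X) :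
    (etaMap X x).val s = s.φ x := by
  show eHM (fun _ : ℝ => x) s = s.φ x
  simp only [eHM]
  rw [intervalIntegral.integral_const, smul_eq_mul, one_div,
    inv_mul_cancel_left₀ (sub_ne_zero.2 s.hab.ne')]
lemma npos {n : ℕ} [NeZero n] : (0:ℝ) < n := by
  have := Nat.pos_of_ne_zero (NeZero.ne n); exact_mod_cast this

lemma coordA (n : ℕ) [NeZero n] (j : ℕ) : (0:ℝ) ≤ (j:ℝ)/n :=
  div_nonneg (Nat.cast_nonneg j) (le_of_lt npos)

lemma coordAB (n : ℕ) [NeZero n] (j : ℕ) : (j:ℝ)/n < ((j:ℝ)+1)/n :=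
  div_lt_div_of_pos_right (by linarith) npos

lemma coordB (n : ℕ) [NeZero n] {j : ℕ} (hj : j < n) : ((j:ℝ)+1)/n ≤ 1 := by
  rw [div_le_one npos]
  have : (j:ℝ) + 1 = ((j+1 : ℕ) : ℝ) := by push_cast; ring
  rw [this]
  exact_mod_cast hj

lemma stepIdx_val (n : ℕ) [NeZero n] (t : ℝ) : (stepIdx n t).val = stepIdxNat n t := rfl

lemma eHM_sub_le {X : Type u} [TopologicalSpace X] {α : ℝ → X} (h : IsStep α) (φ : C(X, ℝ))
    {a b : ℝ} (pa : 0 ≤ a) (pab : a < b) (pb : b ≤ 1) (c : ℝ) (g : ℝ → ℝ)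
    (hg : MeasureTheory.Integrable g MeasureTheory.volume) (hg0 : ∀ t, 0 ≤ g t)
    (hpt : ∀ t ∈ Set.Icc a b, |φ (α t) - c| ≤ g t) :
    |eHM α ⟨φ, a, b, pa, pab, pb⟩ - c| ≤ (1/(b-a)) * ∫ t, g t := by
  have hI := isStep_intervalIntegrable h φ pa pab.le pb
  have hba : (0:ℝ) < b - a := sub_pos.2 pab
  have e1 : eHM α ⟨φ, a, b, pa, pab, pb⟩ - c = (1/(b-a)) * ∫ t in a..b, (φ (α t) - c) := by
    rw [intervalIntegral.integral_sub hI intervalIntegrable_const,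
      intervalIntegral.integral_const, smul_eq_mul]
    simp only [eHM]
    field_simp
  rw [e1, abs_mul, abs_of_pos (one_div_pos.2 hba)]
  apply mul_le_mul_of_nonneg_left _ (one_div_nonneg.2 hba.le)
  calc |∫ t in a..b, (φ (α t) - c)| ≤ ∫ t in a..b, |φ (α t) - c| :=
        intervalIntegral.abs_integral_le_integral_abs pab.le
    _ ≤ ∫ t in a..b, g t :=
        intervalIntegral.integral_mono_on pab.le (hI.sub intervalIntegrable_const).abs
          hg.intervalIntegrable hpt
    _ ≤ ∫ t, g t := by
        rw [intervalIntegral.integral_of_le pab.le]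
        exact MeasureTheory.setIntegral_le_integral hg (Filter.Eventually.of_forall hg0)

lemma eHM_stepIdx_apply (n : ℕ) [NeZero n] {j : ℕ} (hj : j < n) (ψ : C(Fin n, ℝ))
    {a b : ℝ} (hja : a = (j:ℝ)/n) (hjb : b = ((j:ℝ)+1)/n)
    (pa : 0 ≤ a) (pab : a < b) (pb : b ≤ 1) :
    eHM (stepIdx n) ⟨ψ, a, b, pa, pab, pb⟩ = ψ ⟨j, hj⟩ := by
  subst hja hjb
  have hsing : ∀ᵐ t : ℝ, t ∉ ({((j:ℝ)+1)/n} : Set ℝ) :=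
    MeasureTheory.measure_eq_zero_iff_ae_notMem.mp (MeasureTheory.measure_singleton _)
  have hint : ∫ t in ((j:ℝ)/n)..(((j:ℝ)+1)/n), ψ (stepIdx n t) =
      ∫ _ in ((j:ℝ)/n)..(((j:ℝ)+1)/n), (ψ ⟨j, hj⟩ : ℝ) := by
    apply intervalIntegral.integral_congr_ae
    filter_upwards [hsing] with t ht htI
    rw [Set.uIoc_of_le pab.le] at htI
    have h2 : t < ((j:ℝ)+1)/n :=
      lt_of_le_of_ne htI.2 (fun h => ht (Set.mem_singleton_iff.2 h))
    exact congrArg ψ (Fin.ext (stepIdxNat_eq hj htI.1.le h2))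
  simp only [eHM]
  rw [hint, intervalIntegral.integral_const, smul_eq_mul, one_div,
    inv_mul_cancel_left₀ (sub_ne_zero.2 pab.ne')]

lemma eHM_gamma_bound (m : ℕ) (hm : 1 ≤ m) (i : ℕ) (s : SIdx Bool) :
    |eHM (gammaStep m i) s - s.φ false| ≤
      (1/(s.b - s.a)) * (|s.φ true - s.φ false| * (1/(m:ℝ))) := by
  obtain ⟨ψ, a, b, pa, pab, pb⟩ := s
  have hmR : (0:ℝ) < m := by exact_mod_cast hm
  set C := |ψ true - ψ false| with hC
  set lo : ℝ := i/m with hlo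
  set hi : ℝ := ((i:ℝ)+1)/m with hhi
  set g : ℝ → ℝ := Set.indicator (Set.Icc lo hi) (fun _ => C) with hgdef
  have hInt : MeasureTheory.Integrable g MeasureTheory.volume :=
    (MeasureTheory.integrable_indicator_iff measurableSet_Icc).2
      (MeasureTheory.integrableOn_const measure_Icc_lt_top.ne)
  have hg0 : ∀ t, 0 ≤ g t := fun t => Set.indicator_nonneg (fun _ _ => abs_nonneg _) t
  have hpt : ∀ t ∈ Set.Icc a b, |ψ (gammaStep m i t) - ψ false| ≤ g t := by
    intro t htm
    rcases hγ : gammaStep m i t with _ | _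
    · simp only [hγ, sub_self, abs_zero]
      exact hg0 t
    · have hidx : stepIdxNat m t = i := of_decide_eq_true hγ
      have ht0 : 0 ≤ t := le_trans pa htm.1
      have ht1 : t ≤ 1 := le_trans htm.2 pb
      have htm0 : 0 ≤ t * m := by positivity
      have hflo : i ≤ ⌊t * m⌋₊ := by
        unfold stepIdxNat at hidx; omega
      have hlow : lo ≤ t := by
        rw [hlo, div_le_iff₀ hmR]
        calc (i:ℝ) ≤ (⌊t * m⌋₊ : ℝ) := by exact_mod_cast hflo
          _ ≤ t * m := Nat.floor_le htm0
      have hup : t ≤ hi := by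
        rw [hhi, le_div_iff₀ hmR]
        rcases le_or_gt ⌊t * m⌋₊ (m - 1) with hcase | hcase
        · have hie : i = ⌊t * m⌋₊ := by unfold stepIdxNat at hidx; omega
          have := Nat.lt_floor_add_one (t * m)
          rw [← hie] at this
          push_cast at this ⊢
          linarith
        · have hie : i + 1 = m := by unfold stepIdxNat at hidx; omega
          have : t * m ≤ m := by nlinarith
          calc t * m ≤ (m:ℝ) := this
            _ = (i:ℝ) + 1 := by exact_mod_cast hie.symm
      have hmem : t ∈ Set.Icc lo hi := ⟨hlow, hup⟩
      rw [hgdef, Set.indicator_of_mem hmem]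
  have key := eHM_sub_le (isStep_gammaStep m i) ψ pa pab pb (ψ false) g hInt hg0 hpt
  have hint : ∫ t, g t = C * (1/(m:ℝ)) := by
    rw [hgdef, MeasureTheory.integral_indicator_const C measurableSet_Icc,
      Real.volume_real_Icc_of_le (a := lo) (b := hi)
        (by rw [hlo, hhi]; exact div_le_div_of_nonneg_right (by linarith) hmR.le),
      smul_eq_mul]
    have h1 : hi - lo = 1/(m:ℝ) := by rw [hhi, hlo]; field_simp; ring
    rw [h1]
    ring
  rw [hint] at key
  exact key
def pr1C (n : ℕ) : C(Fin n × Fin n, Fin n) := ⟨Prod.fst, continuous_fst⟩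
def pr2C (n : ℕ) : C(Fin n × Fin n, Fin n) := ⟨Prod.snd, continuous_snd⟩
def gC (n : ℕ) : C(Fin n × Fin n, Bool) :=
  ⟨fun p => decide (p.1 = p.2), continuous_of_discreteTopology⟩
noncomputable def dC (n : ℕ) : C(Fin n × Fin n, ℝ) :=
  ⟨fun p => if p.1 = p.2 then 1 else 0, continuous_of_discreteTopology⟩
noncomputable def indC (n : ℕ) (j : ℕ) : C(Fin n, ℝ) :=
  ⟨fun i => if (i : ℕ) = j then 1 else 0, continuous_of_discreteTopology⟩

lemma claimA (n : ℕ) [NeZero n] (ν : HSp (Fin n × Fin n))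
    (h1 : Hmap (pr1C n) ν = toH (stepIdx n) (isStep_stepIdx n))
    (h2 : Hmap (pr2C n) ν = toH (stepIdx n) (isStep_stepIdx n))
    (φ : C(Bool, ℝ)) (pa : (0:ℝ) ≤ 0) (pab : (0:ℝ) < 1) (pb : (1:ℝ) ≤ 1) :
    ν.val ⟨φ.comp (gC n), 0, 1, pa, pab, pb⟩ = φ true := by
  have hmem : ν.val ∈ HSet (Fin n × Fin n) := ν.2
  have hc1 : ∀ (ψ : C(Fin n, ℝ)) (a b : ℝ) (qa : 0 ≤ a) (qab : a < b) (qb : b ≤ 1),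
      ν.val ⟨ψ.comp (pr1C n), a, b, qa, qab, qb⟩ = eHM (stepIdx n) ⟨ψ, a, b, qa, qab, qb⟩ :=
    fun ψ a b qa qab qb => congrFun (congrArg Subtype.val h1) ⟨ψ, a, b, qa, qab, qb⟩
  have hc2 : ∀ (ψ : C(Fin n, ℝ)) (a b : ℝ) (qa : 0 ≤ a) (qab : a < b) (qb : b ≤ 1),
      ν.val ⟨ψ.comp (pr2C n), a, b, qa, qab, qb⟩ = eHM (stepIdx n) ⟨ψ, a, b, qa, qab, qb⟩ :=
    fun ψ a b qa qab qb => congrFun (congrArg Subtype.val h2) ⟨ψ, a, b, qa, qab, qb⟩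
  -- Step 1: on each subinterval, the diagonal indicator has value 1
  have step1 : ∀ (j : ℕ) (hj : j < n) (a b : ℝ), a = (j:ℝ)/n → b = ((j:ℝ)+1)/n →
      ∀ (qa : 0 ≤ a) (qab : a < b) (qb : b ≤ 1),
      ν.val ⟨dC n, a, b, qa, qab, qb⟩ = 1 := by
    intro j hj a b hja hjb qa qab qb
    have hpt : ∀ p : Fin n × Fin n,
        ((indC n j).comp (pr1C n) + (indC n j).comp (pr2C n) +
          ContinuousMap.const (Fin n × Fin n) (-1 : ℝ)) p ≤ dC n p := by
      rintro ⟨x, y⟩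
      simp only [ContinuousMap.add_apply, ContinuousMap.comp_apply, ContinuousMap.const_apply,
        indC, dC, pr1C, pr2C, ContinuousMap.coe_mk]
      by_cases hxy : x = y
      · subst hxy
        rw [if_pos rfl]
        split_ifs <;> norm_num
      · rw [if_neg hxy]
        by_cases hxj : (x:ℕ) = j
        · have hyj : ¬ (y:ℕ) = j := fun h => hxy (Fin.ext (hxj.trans h.symm))
          rw [if_pos hxj, if_neg hyj]; norm_num
        · rw [if_neg hxj]
          split_ifs <;> norm_num
    have hlow := HSet_mono hmem hpt qa qab qb
    rw [HSet_add hmem _ _ qa qab qb, HSet_add hmem _ _ qa qab qb,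
      HSet_const hmem _ qa qab qb, hc1 _ _ _ qa qab qb, hc2 _ _ _ qa qab qb,
      eHM_stepIdx_apply n hj _ hja hjb qa qab qb] at hlow
    have hone : indC n j ⟨j, hj⟩ = 1 := by simp [indC]
    rw [hone] at hlow
    have hpt2 : ∀ p : Fin n × Fin n, dC n p ≤ (ContinuousMap.const (Fin n × Fin n) (1:ℝ)) p := by
      intro p
      simp only [dC, ContinuousMap.coe_mk, ContinuousMap.const_apply]
      split <;> norm_num
    have hup := HSet_mono hmem hpt2 qa qab qb
    rw [HSet_const hmem _ qa qab qb] at hup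
    linarith
  -- Step 2: by induction, the diagonal indicator has value 1 on [0, (j+1)/n]
  have key : ∀ (j : ℕ), j < n → ∀ (b : ℝ), b = ((j:ℝ)+1)/n →
      ∀ (qa : (0:ℝ) ≤ 0) (qab : (0:ℝ) < b) (qb : b ≤ 1),
      ν.val ⟨dC n, 0, b, qa, qab, qb⟩ = 1 := by
    intro j
    induction j with
    | zero =>
      intro hj b hjb qa qab qb
      exact step1 0 hj 0 b (by norm_num) (by rw [hjb]) qa qab qb
    | succ j ih =>
      intro hj b hjb qa qab qb
      set c : ℝ := ((j:ℝ)+1)/n with hcdef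
      have hjn : j < n := by omega
      have hc0 : (0:ℝ) < c := by rw [hcdef]; exact div_pos (by positivity) npos
      have hcb : c < b := by
        rw [hcdef, hjb]
        apply div_lt_div_of_pos_right _ npos
        push_cast; linarith
      have hcn : c ≤ 1 := by rw [hcdef]; exact coordB n hjn
      have hch := HSet_chasles hmem (dC n) qa hc0 hcb qb qa qab qb qa hc0 hcn hc0.le hcb qb
      have e1 := ih hjn c rfl qa hc0 hcn
      have e2 := step1 (j+1) hj c b (by rw [hcdef]; norm_cast) hjb
        hc0.le hcb qb
      rw [e1, e2] at hch
      have hb0 : b ≠ 0 := qab.ne'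
      have : b * ν.val ⟨dC n, 0, b, qa, qab, qb⟩ = b * 1 := by
        rw [mul_one]; rw [sub_zero] at hch; rw [hch]; ring
      exact mul_left_cancel₀ hb0 this
  have hfinal : ν.val ⟨dC n, 0, 1, pa, pab, pb⟩ = 1 := by
    have hn1 : n - 1 < n := by have := Nat.pos_of_ne_zero (NeZero.ne n); omega
    apply key (n-1) hn1 1 _ pa pab pb
    have hcast : ((n-1 : ℕ) : ℝ) + 1 = n := by
      have h1 : 1 ≤ n := Nat.one_le_iff_ne_zero.2 (NeZero.ne n)
      rw [Nat.cast_sub h1]; push_cast; ring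
    rw [hcast, div_self npos.ne']
  -- Step 3: decompose φ ∘ g
  have hdec : φ.comp (gC n) = ContinuousMap.const _ (φ false) + (φ true - φ false) • dC n := by
    ext p
    simp only [ContinuousMap.comp_apply, ContinuousMap.add_apply, ContinuousMap.const_apply,
      ContinuousMap.smul_apply, smul_eq_mul, gC, dC, ContinuousMap.coe_mk]
    by_cases h : p.1 = p.2 <;> simp [h] <;> ring
  rw [show (⟨φ.comp (gC n), 0, 1, pa, pab, pb⟩ : SIdx (Fin n × Fin n)) =
      ⟨ContinuousMap.const _ (φ false) + (φ true - φ false) • dC n, 0, 1, pa, pab, pb⟩ by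
    rw [hdec]]
  rw [HSet_add hmem _ _ pa pab pb, HSet_const hmem _ pa pab pb,
    HSet_smul hmem _ _ pa pab pb, hfinal]
  ring
open Filter Topology in
lemma Bn_eventually_mem {U : Set (HSp Bool)} (hU : U ∈ 𝓝 (etaMap Bool false)) :
    ∀ᶠ m : ℕ in atTop, ∀ t : ℝ, Bn m t ∈ U := by
  rw [mem_nhds_subtype] at hU
  obtain ⟨u, hu, hsub⟩ := hU
  rw [nhds_pi, Filter.mem_pi] at hu
  obtain ⟨I, hIfin, V, hV, hVsub⟩ := hu
  choose ε hε hball using fun i => Metric.mem_nhds_iff.mp (hV i)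
  have hcoord : ∀ i : SIdx Bool, ∀ᶠ m : ℕ in atTop,
      ∀ j : ℕ, dist (eHM (gammaStep m j) i) (Subtype.val (etaMap Bool false) i) < ε i := by
    intro i
    have hb : Tendsto (fun m : ℕ => (1/(i.b - i.a)) * (|i.φ true - i.φ false| * (1/(m:ℝ))))
        atTop (𝓝 0) := by
      have h0 := tendsto_one_div_atTop_nhds_zero_nat (𝕜 := ℝ)
      have h1 := (h0.const_mul (|i.φ true - i.φ false|)).const_mul (1/(i.b - i.a))
      simpa using h1
    filter_upwards [hb.eventually (gt_mem_nhds (hε i)), Filter.eventually_ge_atTop 1]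
      with m hm hm1 j
    have hbd := eHM_gamma_bound m hm1 j i
    rw [Real.dist_eq]
    have hcc : Subtype.val (etaMap Bool false) i = i.φ false := etaMap_coord false i
    rw [hcc]
    exact lt_of_le_of_lt hbd hm
  have hall : ∀ᶠ m : ℕ in atTop, ∀ i ∈ I, ∀ j : ℕ,
      dist (eHM (gammaStep m j) i) (Subtype.val (etaMap Bool false) i) < ε i :=
    (Filter.eventually_all_finite hIfin).2 (fun i _ => hcoord i)
  filter_upwards [hall] with m hm t
  apply hsub
  show (Bn m t).val ∈ u
  apply hVsub
  rw [Set.mem_pi]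
  intro i hi
  apply hball i
  rw [Metric.mem_ball]
  exact hm i hi (stepIdxNat m t)

open Filter Topology in
lemma tendsto_Bn : Tendsto (fun n : ℕ => toH (Bn (n+1)) (isStep_Bn (n+1))) atTop
    (𝓝 (etaMap (HSp Bool) (etaMap Bool false))) := by
  rw [IsEmbedding.subtypeVal.tendsto_nhds_iff]
  rw [tendsto_pi_nhds]
  intro s
  obtain ⟨Φ, a, b, pa, pab, pb⟩ := s
  have hc : Subtype.val (etaMap (HSp Bool) (etaMap Bool false)) ⟨Φ, a, b, pa, pab, pb⟩ =
      Φ (etaMap Bool false) := etaMap_coord (etaMap Bool false) _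
  rw [hc]
  rw [Metric.tendsto_atTop]
  intro ε hε
  have hU : (⇑Φ) ⁻¹' (Metric.ball (Φ (etaMap Bool false)) (ε/2)) ∈ 𝓝 (etaMap Bool false) :=
    Φ.continuous.continuousAt (Metric.ball_mem_nhds _ (by positivity))
  obtain ⟨N, hN⟩ := (Bn_eventually_mem hU).exists_forall_of_atTop
  refine ⟨N, fun n hn => ?_⟩
  set m := n + 1 with hmdef
  have hmem : ∀ t : ℝ, Bn m t ∈ (⇑Φ) ⁻¹' (Metric.ball (Φ (etaMap Bool false)) (ε/2)) :=
    hN m (by omega)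
  set g : ℝ → ℝ := Set.indicator (Set.Icc a b) (fun _ => ε/2) with hgdef
  have hInt : MeasureTheory.Integrable g MeasureTheory.volume :=
    (MeasureTheory.integrable_indicator_iff measurableSet_Icc).2
      (MeasureTheory.integrableOn_const measure_Icc_lt_top.ne)
  have hg0 : ∀ t, 0 ≤ g t := fun t => Set.indicator_nonneg (fun _ _ => by positivity) t
  have hpt : ∀ t ∈ Set.Icc a b, |Φ (Bn m t) - Φ (etaMap Bool false)| ≤ g t := by
    intro t ht
    rw [hgdef, Set.indicator_of_mem ht]
    have := hmem t
    rw [Set.mem_preimage, Metric.mem_ball, Real.dist_eq] at this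
    exact this.le
  have key := eHM_sub_le (isStep_Bn m) Φ pa pab pb (Φ (etaMap Bool false)) g hInt hg0 hpt
  have hint : ∫ t, g t = (b - a) * (ε/2) := by
    rw [hgdef, MeasureTheory.integral_indicator_const _ measurableSet_Icc, Real.volume_real_Icc_of_le pab.le,
      smul_eq_mul]
  rw [hint, one_div, inv_mul_cancel_left₀ (sub_ne_zero.2 pab.ne')] at key
  have : dist (Subtype.val (toH (Bn m) (isStep_Bn m)) ⟨Φ, a, b, pa, pab, pb⟩)
      (Φ (etaMap Bool false)) ≤ ε/2 := by
    rw [Real.dist_eq]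
    exact key
  calc dist _ _ ≤ ε/2 := this
    _ < ε := by linarith
lemma gcomp (n : ℕ) [NeZero n] (i : Fin n) :
    ⇑(gC n) ∘ alphaRow n i = gammaStep n i.val := by
  funext t
  simp only [Function.comp_apply, gC, ContinuousMap.coe_mk, alphaRow, gammaStep]
  exact decide_eq_decide.mpr (by rw [Fin.ext_iff, stepIdx_val]; exact eq_comm)


/-- There is no monad based on the Hartman-Mycielski functor `H`: no family of
continuous maps `μ_X : H(H(X)) → H(X)`, indexed by compact Hausdorff spaces `X`,
is natural and satisfies both unit laws. -/
theorem no_monad_on_HartmanMycielski :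
    ¬ ∃ μ : (X : Type) → [TopologicalSpace X] → [CompactSpace X] → [T2Space X] →
        C(HSp (HSp X), HSp X),
      (∀ (X Y : Type) [TopologicalSpace X] [CompactSpace X] [T2Space X]
          [TopologicalSpace Y] [CompactSpace Y] [T2Space Y] (f : C(X, Y))
          (ξ : HSp (HSp X)), μ Y (Hmap (Hmap f) ξ) = Hmap f (μ X ξ)) ∧
      (∀ (X : Type) [TopologicalSpace X] [CompactSpace X] [T2Space X] (ν : HSp X),
          μ X (Hmap (etaMap X) ν) = ν ∧ μ X (etaMap (HSp X) ν) = ν) := by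
  
  rintro ⟨μ, hnat, hunit⟩
  classical
  set φb : C(Bool, ℝ) := ⟨fun b => if b then 1 else 0, continuous_of_discreteTopology⟩ with hφb
  have hφbt : φb true = 1 := rfl
  have hφbf : φb false = 0 := rfl
  have main : ∀ (n : ℕ) (_ : NeZero n),
      (μ Bool (toH (Bn n) (isStep_Bn n))).val
        ⟨φb, 0, 1, le_refl 0, one_pos, le_refl 1⟩ = 1 := by
    intro n hn
    haveI := hn
    set ξ : HSp (HSp (Fin n × Fin n)) := toH (An n) (isStep_An n) with hξ
    set ν0 : HSp (Fin n) := toH (stepIdx n) (isStep_stepIdx n) with hν0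
    have e_pr1 : Hmap (Hmap (pr1C n)) ξ = Hmap (etaMap (Fin n)) ν0 := by
      rw [hξ, hν0, Hmap_toH, Hmap_toH]
      exact toH_congr (funext fun s => Subtype.ext rfl) _ _
    have e_pr2 : Hmap (Hmap (pr2C n)) ξ = etaMap (HSp (Fin n)) ν0 := by
      rw [hξ, Hmap_toH]
      show toH (⇑(Hmap (pr2C n)) ∘ An n) (isStep_comp _ (isStep_An n)) =
        toH (fun _ : ℝ => ν0) (isStep_const ν0)
      exact toH_congr (funext fun s => Subtype.ext rfl) _ _
    have e_g : Hmap (Hmap (gC n)) ξ = toH (Bn n) (isStep_Bn n) := by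
      rw [hξ, Hmap_toH]
      refine toH_congr (funext fun s => ?_) _ _
      show Hmap (gC n) (An n s) = Bn n s
      have h' : Hmap (gC n) (An n s) =
          toH (⇑(gC n) ∘ alphaRow n (stepIdx n s)) (isStep_comp _ (isStep_alphaRow n _)) :=
        Hmap_toH _ _ _
      rw [h']
      exact toH_congr (gcomp n (stepIdx n s)) _ _
    have h1 : Hmap (pr1C n) (μ _ ξ) = ν0 := by
      rw [← hnat _ _ (pr1C n) ξ, e_pr1]
      exact (hunit (Fin n) ν0).1
    have h2 : Hmap (pr2C n) (μ _ ξ) = ν0 := by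
      rw [← hnat _ _ (pr2C n) ξ, e_pr2]
      exact (hunit (Fin n) ν0).2
    have hg : μ Bool (toH (Bn n) (isStep_Bn n)) = Hmap (gC n) (μ _ ξ) := by
      rw [← e_g]
      exact hnat _ _ (gC n) ξ
    rw [hg]
    have hA := claimA n (μ _ ξ) h1 h2 φb (le_refl 0) one_pos (le_refl 1)
    calc (Hmap (gC n) (μ _ ξ)).val ⟨φb, 0, 1, le_refl 0, one_pos, le_refl 1⟩
        = (μ _ ξ).val ⟨φb.comp (gC n), 0, 1, le_refl 0, one_pos, le_refl 1⟩ := rfl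
      _ = φb true := hA
      _ = 1 := hφbt
  have hlim : Filter.Tendsto (fun k : ℕ => μ Bool (toH (Bn (k+1)) (isStep_Bn (k+1))))
      Filter.atTop (𝓝 (etaMap Bool false)) := by
    have h2 := ((μ Bool).continuous.tendsto _).comp tendsto_Bn
    rwa [(hunit Bool (etaMap Bool false)).2] at h2
  have hev : Filter.Tendsto (fun k : ℕ => (μ Bool (toH (Bn (k+1)) (isStep_Bn (k+1)))).val
      ⟨φb, 0, 1, le_refl 0, one_pos, le_refl 1⟩) Filter.atTop
      (𝓝 ((etaMap Bool false).val ⟨φb, 0, 1, le_refl 0, one_pos, le_refl 1⟩)) :=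
    (((continuous_apply _).comp continuous_subtype_val).tendsto _).comp hlim
  have hconst : (fun k : ℕ => (μ Bool (toH (Bn (k+1)) (isStep_Bn (k+1)))).val
      ⟨φb, 0, 1, le_refl 0, one_pos, le_refl 1⟩) = fun _ => (1:ℝ) :=
    funext fun k => main (k+1) ⟨Nat.succ_ne_zero k⟩
  have hval : (etaMap Bool false).val ⟨φb, 0, 1, le_refl 0, one_pos, le_refl 1⟩ = 0 := by
    rw [etaMap_coord]
    exact hφbf
  rw [hconst, hval] at hev
  have := tendsto_nhds_unique hev tendsto_const_nhds
  norm_num at this
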